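/- Power-law lower bound for the soundness recursion: Let c_f, Δ > 0 and 0 < β < 1. There exists a constant c̃ > 0 depending only on c_f, Δ, β such that: for every function g : {1, 2, 3, …} → ℝ with g(1) ≥ 1 and g(r+1) ≥ g(r) + (g(r)/c_f)^{1/(2−β)}/Δ for all r ≥ 1, one has g(r) ≥ c_f·(c̃·r^{1/(1−β)})^{2−β} for all r ≥ 1; equivalently, (g(r)/c_f)^{1/(2−β)} ≥ c̃·r^{1/(1−β)} for all r ≥ 1. -/

import Mathlib

/-- Bernoulli-type upper bound: `(x+1)^(α+1) ≤ x^(α+1) + (α+1)·(x+1)^α` for `x ≥ 1`, `α ≥ 0`. -/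
lemma aux_bernoulli_step {α x : ℝ} (hα : 0 ≤ α) (hx : 1 ≤ x) :
    (x + 1) ^ (α + 1) ≤ x ^ (α + 1) + (α + 1) * (x + 1) ^ α := by
  have hn0 : (0:ℝ) < x + 1 := by linarith
  have hs : (-1:ℝ) ≤ -(1/(x+1)) := by
    have h : 1/(x+1) ≤ 1 := by rw [div_le_one hn0]; linarith
    linarith
  have hb := one_add_mul_self_le_rpow_one_add hs (by linarith : (1:ℝ) ≤ α + 1)
  have hxn : 1 + -(1/(x+1)) = x/(x+1) := by field_simp; ring
  rw [hxn] at hb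
  have h2 : (x/(x+1))^(α+1) = x^(α+1)/(x+1)^(α+1) := Real.div_rpow (by linarith) hn0.le _
  have hnp : (0:ℝ) < (x+1)^(α+1) := Real.rpow_pos_of_pos hn0 _
  have h3 : (1 + (α+1) * -(1/(x+1))) * (x+1)^(α+1) ≤ x^(α+1) := by
    calc (1 + (α+1) * -(1/(x+1))) * (x+1)^(α+1)
        ≤ (x/(x+1))^(α+1) * (x+1)^(α+1) := mul_le_mul_of_nonneg_right hb hnp.le
      _ = x^(α+1) := by rw [h2]; field_simp
  have h4 : (1 + (α+1) * -(1/(x+1))) * (x+1)^(α+1) = (x+1)^(α+1) - (α+1)*(x+1)^α := by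
    rw [Real.rpow_add_one hn0.ne']
    field_simp
    ring
  rw [h4] at h3
  linarith

/-- Power-law lower bound for the soundness recursion.  For `c_f, Δ > 0`
and `0 < β < 1` there is a constant `ctilde > 0` depending only on `c_f, Δ, β` such that any
sequence `g` (on positive integers) with `g(1) ≥ 1` and
`g(r+1) ≥ g(r) + (g(r)/c_f)^{1/(2−β)}/Δ` satisfies
`g(r) ≥ c_f·(ctilde·r^{1/(1−β)})^{2−β}`, equivalently
`(g(r)/c_f)^{1/(2−β)} ≥ ctilde·r^{1/(1−β)}`, for all `r ≥ 1`. -/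
theorem soundness_recursion_power_law_growth
    (c_f Δ β : ℝ) (hc : 0 < c_f) (hΔ : 0 < Δ) (hβ0 : 0 < β) (hβ1 : β < 1) :
    ∃ ctilde : ℝ, 0 < ctilde ∧
      ∀ g : ℕ → ℝ, 1 ≤ g 1 →
        (∀ r : ℕ, 1 ≤ r → g r + (g r / c_f) ^ ((1 : ℝ) / (2 - β)) / Δ ≤ g (r + 1)) →
        ∀ r : ℕ, 1 ≤ r →
          c_f * (ctilde * (r : ℝ) ^ ((1 : ℝ) / (1 - β))) ^ ((2 : ℝ) - β) ≤ g r ∧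
          ctilde * (r : ℝ) ^ ((1 : ℝ) / (1 - β)) ≤ (g r / c_f) ^ ((1 : ℝ) / (2 - β)) := by
  have h1β : (0:ℝ) < 1 - β := by linarith
  have h2β : (0:ℝ) < 2 - β := by linarith
  obtain ⟨p, hpdef⟩ : ∃ p : ℝ, p = 1 / (2 - β) := ⟨_, rfl⟩
  obtain ⟨α, hαdef⟩ : ∃ α : ℝ, α = 1 / (1 - β) := ⟨_, rfl⟩
  have hp0 : 0 < p := by rw [hpdef]; positivity
  have hα0 : 0 < α := by rw [hαdef]; positivity
  have hαp : (α + 1) * p = α := by rw [hpdef, hαdef]; field_simp; ring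
  have hα2β : α * (2 - β) = α + 1 := by rw [hαdef]; field_simp; ring
  obtain ⟨K, hKdef⟩ : ∃ K : ℝ, K = (α + 1) * 2 ^ (α:ℝ) * Δ := ⟨_, rfl⟩
  have hKpos : 0 < K := by
    rw [hKdef]
    have := Real.rpow_pos_of_pos (by norm_num : (0:ℝ) < 2) α
    positivity
  have hcfp : 0 < c_f ^ p := Real.rpow_pos_of_pos hc _
  have hKcf : 0 < K * c_f ^ p := by positivity
  obtain ⟨c₀, hc₀def⟩ : ∃ c₀ : ℝ, c₀ = (K * c_f ^ p) ^ (-((2 - β) / (1 - β))) := ⟨_, rfl⟩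
  have hc₀pos : 0 < c₀ := by rw [hc₀def]; exact Real.rpow_pos_of_pos hKcf _
  obtain ⟨c, hcdef⟩ : ∃ c : ℝ, c = min 1 c₀ := ⟨_, rfl⟩
  have hcpos : 0 < c := by rw [hcdef]; exact lt_min one_pos hc₀pos
  have hc1 : c ≤ 1 := by rw [hcdef]; exact min_le_left _ _
  have hcc₀ : c ≤ c₀ := by rw [hcdef]; exact min_le_right _ _
  obtain ⟨q, hqdef⟩ : ∃ q : ℝ, q = (1 - β) / (2 - β) := ⟨_, rfl⟩
  have hq0 : 0 < q := by rw [hqdef]; positivity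
  have hqp : q + p = 1 := by rw [hqdef, hpdef]; field_simp; ring
  have hc₀q : c₀ ^ q = (K * c_f ^ p)⁻¹ := by
    have hexp : -((2 - β) / (1 - β)) * q = -1 := by rw [hqdef]; field_simp
    rw [hc₀def, ← Real.rpow_mul hKcf.le, hexp, Real.rpow_neg_one]
  have hcq : c ^ q ≤ (K * c_f ^ p)⁻¹ := by
    rw [← hc₀q]
    exact Real.rpow_le_rpow hcpos.le hcc₀ hq0.le
  have hcp : 0 < c ^ p := Real.rpow_pos_of_pos hcpos _
  have key : c * K ≤ (c / c_f) ^ p := by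
    have h1 : c ^ q * c ^ p = c := by rw [← Real.rpow_add hcpos, hqp, Real.rpow_one]
    have h2 : (c / c_f) ^ p = c ^ p / c_f ^ p := Real.div_rpow hcpos.le hc.le p
    have h3 : c ^ q * (K * c_f ^ p) ≤ 1 := by
      calc c ^ q * (K * c_f ^ p) ≤ (K * c_f ^ p)⁻¹ * (K * c_f ^ p) :=
            mul_le_mul_of_nonneg_right hcq hKcf.le
        _ = 1 := inv_mul_cancel₀ hKcf.ne'
    rw [h2, le_div_iff₀ hcfp]
    calc c * K * c_f ^ p = c ^ q * c ^ p * K * c_f ^ p := by rw [h1]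
      _ = c ^ p * (c ^ q * (K * c_f ^ p)) := by ring
      _ ≤ c ^ p * 1 := mul_le_mul_of_nonneg_left h3 hcp.le
      _ = c ^ p := mul_one _
  refine ⟨(c / c_f) ^ p, by positivity, ?_⟩
  intro g hg1 hrec
  rw [← hpdef] at hrec
  rw [← hpdef, ← hαdef]
  have hcalc : ∀ r : ℕ, 1 ≤ r → (c * (r:ℝ) ^ (α + 1) / c_f) ^ p
      = (c / c_f) ^ p * (r:ℝ) ^ α := by
    intro r hr
    have hr0 : (0:ℝ) ≤ (r:ℝ) := by positivity
    rw [mul_div_right_comm, Real.mul_rpow (by positivity) (by positivity),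
      ← Real.rpow_mul hr0, hαp]
  have main : ∀ r : ℕ, 1 ≤ r → c * (r:ℝ) ^ (α + 1) ≤ g r := by
    intro r hr
    induction r, hr using Nat.le_induction with
    | base =>
        simp only [Nat.cast_one, Real.one_rpow, mul_one]
        linarith
    | succ n hn ih =>
        have hx : (1:ℝ) ≤ (n:ℝ) := by exact_mod_cast hn
        have hmono : (c * (n:ℝ) ^ (α + 1) / c_f) ^ p ≤ (g n / c_f) ^ p := by
          apply Real.rpow_le_rpow (by positivity) _ hp0.le
          gcongr
        rw [hcalc n hn] at hmono
        have hC : c * K * (n:ℝ) ^ α ≤ (g n / c_f) ^ p := by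
          calc c * K * (n:ℝ) ^ α ≤ (c / c_f) ^ p * (n:ℝ) ^ α :=
                mul_le_mul_of_nonneg_right key (by positivity)
            _ ≤ (g n / c_f) ^ p := hmono
        have hD : c * (α + 1) * (2 ^ (α:ℝ) * (n:ℝ) ^ α) ≤ (g n / c_f) ^ p / Δ := by
          rw [le_div_iff₀ hΔ]
          calc c * (α + 1) * (2 ^ (α:ℝ) * (n:ℝ) ^ α) * Δ = c * K * (n:ℝ) ^ α := by
                rw [hKdef]; ring
            _ ≤ (g n / c_f) ^ p := hC
        have e3 : ((n:ℝ) + 1) ^ α ≤ 2 ^ (α:ℝ) * (n:ℝ) ^ α := by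
          rw [← Real.mul_rpow (by norm_num) (by positivity)]
          exact Real.rpow_le_rpow (by linarith) (by linarith) hα0.le
        have e4 := aux_bernoulli_step hα0.le hx
        have hrecn := hrec n hn
        have hfin : c * ((n:ℝ) + 1) ^ (α + 1) ≤ g (n + 1) := by
          have h5 : c * ((n:ℝ) + 1) ^ (α + 1)
              ≤ c * (n:ℝ) ^ (α + 1) + c * (α + 1) * ((n:ℝ) + 1) ^ α := by
            nlinarith [mul_le_mul_of_nonneg_left e4 hcpos.le]
          have h6 : c * (α + 1) * ((n:ℝ) + 1) ^ α
              ≤ c * (α + 1) * (2 ^ (α:ℝ) * (n:ℝ) ^ α) := by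
            apply mul_le_mul_of_nonneg_left e3 (by positivity)
          linarith
        convert hfin using 3
        push_cast
        ring
  intro r hr
  have hmr := main r hr
  have hr0 : (0:ℝ) ≤ (r:ℝ) := by positivity
  have hsec : (c / c_f) ^ p * (r:ℝ) ^ α ≤ (g r / c_f) ^ p := by
    rw [← hcalc r hr]
    apply Real.rpow_le_rpow (by positivity) _ hp0.le
    gcongr
  refine ⟨?_, hsec⟩
  have heq : c_f * ((c / c_f) ^ p * (r:ℝ) ^ α) ^ ((2:ℝ) - β) = c * (r:ℝ) ^ (α + 1) := by
    rw [Real.mul_rpow (by positivity) (by positivity),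
      ← Real.rpow_mul (by positivity : (0:ℝ) ≤ c / c_f),
      ← Real.rpow_mul hr0]
    rw [show p * (2 - β) = 1 by rw [hpdef]; field_simp, hα2β, Real.rpow_one]
    rw [← mul_assoc, show c_f * (c / c_f) = c by field_simp]
  rw [heq]
  exact hmr
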